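/- Fix m ≥ 1 and let f : ℕ → ℕ be defined by f(0) = 2, f(1) = 4, and f(k) = 3f(k−1) + 2f(k−2) for k ≥ 2. Let c = c_{m−1} ... c_0 be a codeword of NPC(m), with symbols viewed as natural numbers in {0,1,2,3}. For 0 ≤ i ≤ m−1 define: y_{i,1} = 1 if i+2 ≤ m−1, c_{i+2} ∈ {0,1}, c_{i+1} = 3, and c_i ∈ {2,3}, and y_{i,1} = 0 otherwise; y_{i,2} = 1 if y_{i,1} = 0, i+1 ≤ m−1, c_{i+1} ∈ {2,3}, and c_i ∈ {1,2,3}, and y_{i,2} = 0 otherwise. Then the lexicographic index g(c) of c in NPC(m) satisfies 4·g(c) = Σ_{i=0}^{m−1} [ (c_i − 2y_{i,1} − y_{i,2}) · f(i+1) + 2 y_{i,2} · f(i) ] (an equality of integers). -/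

import Mathlib

/-- The NP-LOCO code: words of length `m` over the alphabet `{0,1,2,3}`
(position `m-1` most significant) containing no contiguous subword `u 3 v` with
`u, v ∈ {0,1}` and no contiguous subword `u 0 v` with `u, v ∈ {2,3}`. -/
def NPC (m : ℕ) : Set (Fin m → Fin 4) :=
  {c | ∀ i : ℕ, ∀ h : i + 2 < m,
      ¬((c ⟨i + 2, h⟩ ∈ ({0, 1} : Set (Fin 4)) ∧ c ⟨i + 1, by omega⟩ = 3 ∧
            c ⟨i, by omega⟩ ∈ ({0, 1} : Set (Fin 4))) ∨
        (c ⟨i + 2, h⟩ ∈ ({2, 3} : Set (Fin 4)) ∧ c ⟨i + 1, by omega⟩ = 0 ∧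
            c ⟨i, by omega⟩ ∈ ({2, 3} : Set (Fin 4))))}

/-- `w` is lexicographically smaller than `c` (position `m-1` most significant):
at the most significant position where they differ, `w` has the smaller symbol. -/
def wordLT {m q : ℕ} (w c : Fin m → Fin q) : Prop :=
  ∃ k : Fin m, w k < c k ∧ ∀ j : Fin m, k < j → w j = c j

/-- The lexicographic index of `c` in the code `C`: the number of codewords of
`C` lexicographically smaller than `c`. -/
noncomputable def lexIndex {m q : ℕ} (C : Set (Fin m → Fin q)) (c : Fin m → Fin q) : ℕ :=
  {w ∈ C | wordLT w c}.ncard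

/-- The natural-number value of symbol `c_i`, with an out-of-alphabet default
for out-of-range indices. -/
def extVal {m q : ℕ} (c : Fin m → Fin q) (i : ℕ) : ℕ :=
  if h : i < m then (c ⟨i, h⟩ : ℕ) else q

/-- `y_{i,1} = 1` iff `i+2 ≤ m-1`, `c_{i+2} ∈ {0,1}`, `c_{i+1} = 3`, and `c_i ∈ {2,3}`. -/
def npY1 {m : ℕ} (c : Fin m → Fin 4) (i : ℕ) : ℤ :=
  if i + 2 < m ∧ extVal c (i + 2) ∈ ({0, 1} : Finset ℕ) ∧ extVal c (i + 1) = 3 ∧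
      extVal c i ∈ ({2, 3} : Finset ℕ)
  then 1 else 0

/-- `y_{i,2} = 1` iff `y_{i,1} = 0`, `i+1 ≤ m-1`, `c_{i+1} ∈ {2,3}`, and `c_i ∈ {1,2,3}`. -/
def npY2 {m : ℕ} (c : Fin m → Fin 4) (i : ℕ) : ℤ :=
  if npY1 c i = 0 ∧ i + 1 < m ∧ extVal c (i + 1) ∈ ({2, 3} : Finset ℕ) ∧
      extVal c i ∈ ({1, 2, 3} : Finset ℕ)
  then 1 else 0

namespace NPAux

def bad (x y z : Fin 4) : Prop :=
  (x.val ≤ 1 ∧ y = 3 ∧ z.val ≤ 1) ∨ (2 ≤ x.val ∧ y = 0 ∧ 2 ≤ z.val)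

instance (x y z : Fin 4) : Decidable (bad x y z) := by unfold bad; infer_instance

def badO : Option (Fin 4) → Option (Fin 4) → Option (Fin 4) → Prop
  | some x, some y, some z => bad x y z
  | _, _, _ => False

instance : ∀ x y z, Decidable (badO x y z)
  | some _, some _, some _ => by unfold badO; infer_instance
  | none, _, _ => isFalse (fun h => h)
  | some _, none, _ => isFalse (fun h => h)
  | some _, some _, none => isFalse (fun h => h)

@[simp] lemma badO_some (x y z : Fin 4) : badO (some x) (some y) (some z) ↔ bad x y z := Iff.rfl
@[simp] lemma badO_none1 (y z : Option (Fin 4)) : ¬ badO none y z := fun h => h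
@[simp] lemma badO_none2 (x : Option (Fin 4)) (z : Option (Fin 4)) : ¬ badO x none z := by
  cases x <;> exact fun h => h
@[simp] lemma badO_none3 (x y : Option (Fin 4)) : ¬ badO x y none := by
  cases x <;> cases y <;> exact fun h => h

/-- positions `0..n-1` are `u`, position `n` is `y?`, position `n+1` is `x?`. -/
def ctxGet {n : ℕ} (x? y? : Option (Fin 4)) (u : Fin n → Fin 4) (i : ℕ) : Option (Fin 4) :=
  if h : i < n then some (u ⟨i, h⟩) else if i = n then y? else if i = n + 1 then x? else none

lemma ctxGet_lt {n : ℕ} (x? y? : Option (Fin 4)) (u : Fin n → Fin 4) {i : ℕ} (h : i < n) :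
    ctxGet x? y? u i = some (u ⟨i, h⟩) := dif_pos h

lemma ctxGet_eq {n : ℕ} (x? y? : Option (Fin 4)) (u : Fin n → Fin 4) :
    ctxGet x? y? u n = y? := by
  unfold ctxGet; rw [dif_neg (by omega), if_pos rfl]

lemma ctxGet_eq1 {n : ℕ} (x? y? : Option (Fin 4)) (u : Fin n → Fin 4) :
    ctxGet x? y? u (n+1) = x? := by
  unfold ctxGet; rw [dif_neg (by omega), if_neg (by omega), if_pos rfl]

lemma ctxGet_ge {n : ℕ} (x? y? : Option (Fin 4)) (u : Fin n → Fin 4) {i : ℕ} (h : n + 2 ≤ i) :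
    ctxGet x? y? u i = none := by
  unfold ctxGet; rw [dif_neg (by omega), if_neg (by omega), if_neg (by omega)]

def OKf {n : ℕ} (x? y? : Option (Fin 4)) (u : Fin n → Fin 4) : Prop :=
  ∀ i, i < n → ¬ badO (ctxGet x? y? u (i+2)) (ctxGet x? y? u (i+1)) (ctxGet x? y? u i)

instance {n : ℕ} (x? y? : Option (Fin 4)) (u : Fin n → Fin 4) : Decidable (OKf x? y? u) := by
  unfold OKf; infer_instance

def cnt (x? y? : Option (Fin 4)) (n : ℕ) : ℕ :=
  (Finset.univ.filter (fun u : Fin n → Fin 4 => OKf x? y? u)).card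

def G : ℕ → ℕ × ℕ
  | 0 => (1, 1)
  | n+1 => (3 * (G n).1 + (G n).2, 2 * (G n).1)

def gF (n : ℕ) : ℕ := (G n).1
def gR (n : ℕ) : ℕ := (G n).2

@[simp] lemma gF_zero : gF 0 = 1 := rfl
@[simp] lemma gR_zero : gR 0 = 1 := rfl
lemma gF_succ (n : ℕ) : gF (n+1) = 3 * gF n + gR n := rfl
lemma gR_succ (n : ℕ) : gR (n+1) = 2 * gF n := rfl

/-- extend a word by a new most significant symbol -/
def ext1 {n : ℕ} (v : Fin n → Fin 4) (z : Fin 4) : Fin (n+1) → Fin 4 :=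
  fun j => if h : j.val < n then v ⟨j.val, h⟩ else z

lemma ext1_lt {n : ℕ} (v : Fin n → Fin 4) (z : Fin 4) {j : Fin (n+1)} (h : j.val < n) :
    ext1 v z j = v ⟨j.val, h⟩ := dif_pos h

lemma ext1_last {n : ℕ} (v : Fin n → Fin 4) (z : Fin 4) {j : Fin (n+1)} (h : j.val = n) :
    ext1 v z j = z := dif_neg (by omega)

lemma ctxGet_ext1 {n : ℕ} (x? y? : Option (Fin 4)) (v : Fin n → Fin 4) (z : Fin 4)
    (i : ℕ) (hi : i ≠ n + 2) :
    ctxGet x? y? (ext1 v z) i = ctxGet y? (some z) v i := by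
  rcases lt_trichotomy i n with h | h | h
  · rw [ctxGet_lt _ _ _ (show i < n + 1 by omega), ctxGet_lt _ _ _ h,
      ext1_lt v z (j := ⟨i, by omega⟩) h]
  · subst h
    rw [ctxGet_lt _ _ _ (show i < i + 1 by omega), ctxGet_eq,
      ext1_last v z (j := ⟨i, by omega⟩) rfl]
  · rcases Nat.lt_or_ge i (n+2) with h2 | h2
    · have : i = n + 1 := by omega
      subst this
      rw [ctxGet_eq, ctxGet_eq1]
    · have h3 : n + 3 ≤ i := by omega
      rw [ctxGet_ge _ _ _ (by omega), ctxGet_ge _ _ _ (by omega)]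

lemma okf_ext1 {n : ℕ} (x? y? : Option (Fin 4)) (v : Fin n → Fin 4) (z : Fin 4) :
    OKf x? y? (ext1 v z) ↔ ¬ badO x? y? (some z) ∧ OKf y? (some z) v := by
  have htop2 : ctxGet x? y? (ext1 v z) (n+2) = x? := ctxGet_eq1 _ _ _
  have htop1 : ctxGet x? y? (ext1 v z) (n+1) = y? := ctxGet_eq _ _ _
  have htop0 : ctxGet x? y? (ext1 v z) n = some z := by
    rw [ctxGet_lt _ _ _ (show n < n + 1 by omega), ext1_last v z (j := ⟨n, by omega⟩) rfl]
  constructor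
  · intro H
    refine ⟨by have := H n (by omega); rwa [htop2, htop1, htop0] at this, fun i hi => ?_⟩
    have := H i (by omega)
    rwa [ctxGet_ext1 _ _ _ _ _ (by omega), ctxGet_ext1 _ _ _ _ _ (by omega),
      ctxGet_ext1 _ _ _ _ _ (by omega)] at this
  · rintro ⟨h1, h2⟩ i hi
    rcases Nat.lt_or_ge i n with h | h
    · rw [ctxGet_ext1 _ _ _ _ _ (by omega), ctxGet_ext1 _ _ _ _ _ (by omega),
        ctxGet_ext1 _ _ _ _ _ (by omega)]
      exact h2 i h
    · have : i = n := by omega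
      subst this
      rw [htop2, htop1, htop0]; exact h1

lemma ext1_trunc {n : ℕ} (u : Fin (n+1) → Fin 4) (z : Fin 4) (hz : u ⟨n, by omega⟩ = z) :
    ext1 (fun i : Fin n => u i.castSucc) z = u := by
  funext j
  rcases Nat.lt_or_ge j.val n with h | h
  · rw [ext1_lt _ _ h]
    exact congrArg u (Fin.ext (by simp))
  · have hjn : j.val = n := by have := j.isLt; omega
    rw [ext1_last _ _ hjn, ← hz]
    exact congrArg u (Fin.ext (by simp [hjn]))

lemma trunc_ext1 {n : ℕ} (v : Fin n → Fin 4) (z : Fin 4) :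
    (fun i : Fin n => ext1 v z i.castSucc) = v := by
  funext i
  rw [ext1_lt _ _ (by simp)]
  exact congrArg v (Fin.ext (by simp))

lemma cnt_succ (x? y? : Option (Fin 4)) (n : ℕ) :
    cnt x? y? (n+1) = ∑ z : Fin 4, if badO x? y? (some z) then 0 else cnt y? (some z) n := by
  classical
  unfold cnt
  have hsplit : (Finset.univ.filter (fun u : Fin (n+1) → Fin 4 => OKf x? y? u))
      = Finset.univ.biUnion (fun z : Fin 4 =>
          Finset.univ.filter (fun u : Fin (n+1) → Fin 4 => OKf x? y? u ∧ u ⟨n, by omega⟩ = z)) := by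
    ext u
    simp only [Finset.mem_filter, Finset.mem_univ, true_and, Finset.mem_biUnion]
    constructor
    · intro h; exact ⟨u ⟨n, by omega⟩, h, rfl⟩
    · rintro ⟨z, h, -⟩; exact h
  have hdisj : ∀ z1 ∈ (Finset.univ : Finset (Fin 4)), ∀ z2 ∈ (Finset.univ : Finset (Fin 4)),
      z1 ≠ z2 → Disjoint
        (Finset.univ.filter (fun u : Fin (n+1) → Fin 4 => OKf x? y? u ∧ u ⟨n, by omega⟩ = z1))
        (Finset.univ.filter (fun u : Fin (n+1) → Fin 4 => OKf x? y? u ∧ u ⟨n, by omega⟩ = z2)) := by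
    intro z1 _ z2 _ hne
    rw [Finset.disjoint_left]
    rintro u h1 h2
    rw [Finset.mem_filter] at h1 h2
    exact hne (h1.2.2 ▸ h2.2.2)
  rw [hsplit, Finset.card_biUnion hdisj]
  congr 1; funext z
  by_cases hb : badO x? y? (some z)
  · rw [if_pos hb, Finset.card_eq_zero, Finset.filter_eq_empty_iff]
    rintro u - ⟨hu, hz⟩
    rw [← ext1_trunc u z hz] at hu
    exact ((okf_ext1 x? y? _ z).mp hu).1 hb
  · rw [if_neg hb]
    apply Finset.card_bij' (fun u _ => (fun i : Fin n => u i.castSucc))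
      (fun v _ => ext1 v z)
    · intro u hu
      simp only [Finset.mem_filter, Finset.mem_univ, true_and] at hu ⊢
      have hu' := hu.1
      rw [← ext1_trunc u z hu.2] at hu'
      exact ((okf_ext1 x? y? _ z).mp hu').2
    · intro v hv
      simp only [Finset.mem_filter, Finset.mem_univ, true_and] at hv ⊢
      refine ⟨(okf_ext1 x? y? v z).mpr ⟨hb, hv⟩, ext1_last v z rfl⟩
    · intro u hu
      simp only [Finset.mem_filter, Finset.mem_univ, true_and] at hu
      exact ext1_trunc u z hu.2
    · intro v hv
      exact trunc_ext1 v z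

lemma val0 : ((0:Fin 4):ℕ) = 0 := rfl
lemma val1 : ((1:Fin 4):ℕ) = 1 := rfl
lemma val2 : ((2:Fin 4):ℕ) = 2 := rfl
lemma val3 : ((3:Fin 4):ℕ) = 3 := rfl

def bad2 (x y : Fin 4) : Prop := (x.val ≤ 1 ∧ y = 3) ∨ (2 ≤ x.val ∧ y = 0)

instance (x y : Fin 4) : Decidable (bad2 x y) := by unfold bad2; infer_instance

lemma cnt_zero (x? y? : Option (Fin 4)) : cnt x? y? 0 = 1 := by
  unfold cnt
  have h : ∀ u ∈ (Finset.univ : Finset (Fin 0 → Fin 4)), OKf x? y? u :=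
    fun u _ i hi => absurd hi (Nat.not_lt_zero i)
  rw [Finset.filter_true_of_mem h, Finset.card_univ]
  simp

lemma cnt_some (n : ℕ) : ∀ x y : Fin 4, cnt (some x) (some y) n = if bad2 x y then gR n else gF n := by
  induction n with
  | zero => intro x y; rw [cnt_zero]; split <;> rfl
  | succ n ih =>
    intro x y
    rw [cnt_succ]
    simp only [badO_some, ih]
    fin_cases x <;> fin_cases y <;>
      simp [Fin.sum_univ_four, bad, bad2, gF_succ, gR_succ, val0, val1, val2, val3] <;> ring

lemma cnt_none_some (n : ℕ) (y : Fin 4) : cnt none (some y) n = gF n := by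
  cases n with
  | zero => rw [cnt_zero]; rfl
  | succ n =>
    rw [cnt_succ]
    simp only [cnt_some]
    have : ∀ z : Option (Fin 4), ¬ badO none (some y) z := fun z => badO_none1 _ _
    fin_cases y <;>
      simp [Fin.sum_univ_four, bad2, gF_succ, gR_succ, this, val0, val1, val2, val3] <;> ring

lemma f_facts (f : ℕ → ℕ) (hf0 : f 0 = 2) (hf1 : f 1 = 4)
    (hrec : ∀ k : ℕ, 2 ≤ k → f k = 3 * f (k - 1) + 2 * f (k - 2)) :
    ∀ n, f (n+1) = 4 * gF n ∧ f n = 2 * gR n := by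
  intro n
  induction n with
  | zero => exact ⟨by simp [hf1], by simp [hf0]⟩
  | succ n ih =>
    constructor
    · have h := hrec (n+2) (by omega)
      rw [show n+2-1 = n+1 from rfl, show n+2-2 = n from rfl] at h
      rw [h, ih.1, ih.2, gF_succ]; ring
    · rw [ih.1, gR_succ]; ring

lemma ctxGet_none_ge {n : ℕ} (u : Fin n → Fin 4) {i : ℕ} (h : n ≤ i) :
    ctxGet none none u i = none := by
  unfold ctxGet
  rw [dif_neg (by omega)]
  split_ifs <;> rfl

def oGet {m : ℕ} (c : Fin m → Fin 4) (i : ℕ) : Option (Fin 4) :=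
  if h : i < m then some (c ⟨i, h⟩) else none

lemma oGet_eq_ctx {m : ℕ} (c : Fin m → Fin 4) (i : ℕ) :
    ctxGet none none c i = oGet c i := by
  unfold ctxGet oGet
  split_ifs <;> rfl

lemma bad_iff (x y z : Fin 4) :
    ((x ∈ ({0, 1} : Set (Fin 4)) ∧ y = 3 ∧ z ∈ ({0, 1} : Set (Fin 4))) ∨
      (x ∈ ({2, 3} : Set (Fin 4)) ∧ y = 0 ∧ z ∈ ({2, 3} : Set (Fin 4)))) ↔ bad x y z := by
  have h01 : ∀ a : Fin 4, a ∈ ({0, 1} : Set (Fin 4)) ↔ a.val ≤ 1 := by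
    intro a
    simp only [Set.mem_insert_iff, Set.mem_singleton_iff]
    fin_cases a <;> decide
  have h23 : ∀ a : Fin 4, a ∈ ({2, 3} : Set (Fin 4)) ↔ 2 ≤ a.val := by
    intro a
    simp only [Set.mem_insert_iff, Set.mem_singleton_iff]
    fin_cases a <;> decide
  rw [h01, h01, h23, h23]
  exact Iff.rfl

lemma mem_NPC_iff {m : ℕ} (w : Fin m → Fin 4) : w ∈ NPC m ↔ OKf none none w := by
  constructor
  · intro h i hi
    by_cases h2 : i + 2 < m
    · rw [ctxGet_lt none none w h2, ctxGet_lt none none w (show i+1 < m by omega),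
        ctxGet_lt none none w (show i < m by omega), badO_some]
      intro hb
      exact h i h2 ((bad_iff _ _ _).mpr hb)
    · rw [ctxGet_none_ge w (show m ≤ i + 2 by omega)]
      exact badO_none1 _ _
  · intro h i h2
    intro hor
    refine h i (by omega) ?_
    rw [ctxGet_lt none none w h2, ctxGet_lt none none w (show i+1 < m by omega),
      ctxGet_lt none none w (show i < m by omega), badO_some]
    exact (bad_iff _ _ _).mp hor

section Glue

variable {m : ℕ} (c : Fin m → Fin 4) (k : Fin m) (a : Fin 4)

def glue (u : Fin k.val → Fin 4) : Fin m → Fin 4 :=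
  fun j => if h : j.val < k.val then u ⟨j.val, h⟩ else if j.val = k.val then a else c j

variable (u : Fin k.val → Fin 4)

lemma glue_lt {j : Fin m} (h : j.val < k.val) : glue c k a u j = u ⟨j.val, h⟩ := dif_pos h

lemma glue_eqk {j : Fin m} (h : j.val = k.val) : glue c k a u j = a := by
  unfold glue; rw [dif_neg (by omega), if_pos h]

lemma glue_gt {j : Fin m} (h : k.val < j.val) : glue c k a u j = c j := by
  unfold glue; rw [dif_neg (by omega), if_neg (by omega)]

lemma ctxGet_glue_low {i : ℕ} (hi : i ≤ k.val + 1) :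
    ctxGet none none (glue c k a u) i = ctxGet (oGet c (k.val+1)) (some a) u i := by
  rcases lt_trichotomy i k.val with h | h | h
  · rw [ctxGet_lt none none _ (show i < m by omega), ctxGet_lt _ _ _ h,
      glue_lt c k a u (j := ⟨i, by omega⟩) h]
  · subst h
    rw [ctxGet_lt none none _ (show k.val < m from k.isLt), ctxGet_eq,
      glue_eqk c k a u (j := ⟨k.val, k.isLt⟩) rfl]
  · have hik : i = k.val + 1 := by omega
    subst hik
    rw [ctxGet_eq1]
    by_cases h2 : k.val + 1 < m
    · rw [ctxGet_lt none none _ h2, glue_gt c k a u (j := ⟨k.val+1, h2⟩) (by simp)]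
      unfold oGet
      rw [dif_pos h2]
    · rw [ctxGet_none_ge _ (by omega)]
      unfold oGet
      rw [dif_neg h2]

lemma ctxGet_glue_high {i : ℕ} (hi : k.val < i) :
    ctxGet none none (glue c k a u) i = ctxGet none none c i := by
  by_cases h : i < m
  · rw [ctxGet_lt none none _ h, ctxGet_lt none none _ h,
      glue_gt c k a u (j := ⟨i, h⟩) hi]
  · rw [ctxGet_none_ge _ (by omega), ctxGet_none_ge _ (by omega)]

lemma okf_glue (hc : OKf none none c) :
    OKf none none (glue c k a u) ↔
      ¬ badO (oGet c (k.val+2)) (oGet c (k.val+1)) (some a) ∧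
        OKf (oGet c (k.val+1)) (some a) u := by
  constructor
  · intro H
    constructor
    · have := H k.val k.isLt
      rwa [ctxGet_glue_high c k a u (by omega), oGet_eq_ctx,
        ctxGet_glue_low c k a u (by omega), ctxGet_eq1,
        ctxGet_glue_low c k a u (by omega), ctxGet_eq] at this
    · intro i hi
      have := H i (by omega)
      rwa [ctxGet_glue_low c k a u (by omega), ctxGet_glue_low c k a u (by omega),
        ctxGet_glue_low c k a u (by omega)] at this
  · rintro ⟨h1, h2⟩ i hi
    rcases lt_trichotomy i k.val with h | h | h
    · rw [ctxGet_glue_low c k a u (by omega), ctxGet_glue_low c k a u (by omega),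
        ctxGet_glue_low c k a u (by omega)]
      exact h2 i h
    · subst h
      rw [ctxGet_glue_high c k a u (by omega), oGet_eq_ctx,
        ctxGet_glue_low c k a u (by omega), ctxGet_eq1,
        ctxGet_glue_low c k a u (by omega), ctxGet_eq]
      exact h1
    · rw [ctxGet_glue_high c k a u (by omega), ctxGet_glue_high c k a u (by omega),
        ctxGet_glue_high c k a u (by omega)]
      exact hc i hi

lemma glue_trunc (w : Fin m → Fin 4) (hk : w k = a) (hup : ∀ j, k < j → w j = c j) :
    glue c k a (fun i : Fin k.val => w ⟨i.val, lt_trans i.isLt k.isLt⟩) = w := by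
  funext j
  rcases lt_trichotomy j.val k.val with h | h | h
  · exact (glue_lt c k a _ h).trans (congrArg w (Fin.ext (by simp)))
  · have hj : j = k := Fin.ext h
    rw [glue_eqk c k a _ h, hj]
    exact hk.symm
  · rw [glue_gt c k a _ h]
    exact (hup j h).symm

lemma trunc_glue : (fun i : Fin k.val => glue c k a u ⟨i.val, lt_trans i.isLt k.isLt⟩) = u := by
  funext i
  rw [glue_lt c k a u (j := ⟨i.val, lt_trans i.isLt k.isLt⟩) (by simp)]

end Glue

lemma card_fiber {m : ℕ} (c : Fin m → Fin 4) (hc : OKf none none c) (k : Fin m) (a : Fin 4) :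
    (Finset.univ.filter (fun w : Fin m → Fin 4 =>
        OKf none none w ∧ w k = a ∧ ∀ j, k < j → w j = c j)).card
      = if badO (oGet c (k.val+2)) (oGet c (k.val+1)) (some a) then 0
        else cnt (oGet c (k.val+1)) (some a) k.val := by
  by_cases hb : badO (oGet c (k.val+2)) (oGet c (k.val+1)) (some a)
  · rw [if_pos hb, Finset.card_eq_zero, Finset.filter_eq_empty_iff]
    rintro w - ⟨hw, hk, hup⟩
    rw [← glue_trunc c k a w hk hup] at hw
    exact ((okf_glue c k a _ hc).mp hw).1 hb
  · rw [if_neg hb]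
    unfold cnt
    apply Finset.card_bij' (fun w _ => fun i : Fin k.val => w ⟨i.val, lt_trans i.isLt k.isLt⟩)
      (fun u _ => glue c k a u)
    · intro w hw
      simp only [Finset.mem_filter, Finset.mem_univ, true_and] at hw ⊢
      have hw' := hw.1
      rw [← glue_trunc c k a w hw.2.1 hw.2.2] at hw'
      exact ((okf_glue c k a _ hc).mp hw').2
    · intro u hu
      simp only [Finset.mem_filter, Finset.mem_univ, true_and] at hu ⊢
      exact ⟨(okf_glue c k a u hc).mpr ⟨hb, hu⟩, glue_eqk c k a u rfl,
        fun j hj => glue_gt c k a u hj⟩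
    · intro w hw
      simp only [Finset.mem_filter, Finset.mem_univ, true_and] at hw
      exact glue_trunc c k a w hw.2.1 hw.2.2
    · intro u hu
      exact trunc_glue c k a u

end NPAux

open NPAux in
theorem stmt18 (m : ℕ) (hm : 1 ≤ m) (f : ℕ → ℕ) (hf0 : f 0 = 2) (hf1 : f 1 = 4)
    (hrec : ∀ k : ℕ, 2 ≤ k → f k = 3 * f (k - 1) + 2 * f (k - 2))
    (c : Fin m → Fin 4) (hc : c ∈ NPC m) :
    4 * (lexIndex (NPC m) c : ℤ) =
      ∑ i : Fin m,
        ((((c i : ℕ) : ℤ) - 2 * npY1 c (i : ℕ) - npY2 c (i : ℕ)) * (f ((i : ℕ) + 1) : ℤ)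
          + 2 * npY2 c (i : ℕ) * (f (i : ℕ) : ℤ)) := by
  classical
  have hcO : OKf none none c := (mem_NPC_iff c).mp hc
  have hff := f_facts f hf0 hf1 hrec
  have hset : {w ∈ NPC m | wordLT w c} =
      ↑(Finset.univ.filter (fun w : Fin m → Fin 4 => OKf none none w ∧ wordLT w c)) := by
    ext w
    simp only [Set.mem_sep_iff, Finset.coe_filter, Set.mem_setOf_eq, Finset.mem_univ, true_and,
      mem_NPC_iff]
  have hlex : lexIndex (NPC m) c
      = (Finset.univ.filter (fun w : Fin m → Fin 4 => OKf none none w ∧ wordLT w c)).card := by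
    rw [lexIndex, hset, Set.ncard_coe_finset]
  have hpart : Finset.univ.filter (fun w : Fin m → Fin 4 => OKf none none w ∧ wordLT w c)
      = Finset.univ.biUnion (fun k : Fin m => Finset.univ.filter
          (fun w : Fin m → Fin 4 => OKf none none w ∧ w k < c k ∧ ∀ j, k < j → w j = c j)) := by
    ext w
    simp only [Finset.mem_filter, Finset.mem_univ, true_and, Finset.mem_biUnion]
    simp only [wordLT]
    constructor
    · rintro ⟨hw, k, h1, h2⟩
      exact ⟨k, hw, h1, h2⟩
    · rintro ⟨k, hw, h1, h2⟩
      exact ⟨hw, k, h1, h2⟩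
  have hdisj1 : ∀ k1 ∈ (Finset.univ : Finset (Fin m)), ∀ k2 ∈ (Finset.univ : Finset (Fin m)),
      k1 ≠ k2 → Disjoint
        (Finset.univ.filter (fun w : Fin m → Fin 4 =>
          OKf none none w ∧ w k1 < c k1 ∧ ∀ j, k1 < j → w j = c j))
        (Finset.univ.filter (fun w : Fin m → Fin 4 =>
          OKf none none w ∧ w k2 < c k2 ∧ ∀ j, k2 < j → w j = c j)) := by
    intro k1 _ k2 _ hne
    rw [Finset.disjoint_left]
    rintro w h1 h2
    rw [Finset.mem_filter] at h1 h2
    rcases lt_or_gt_of_ne hne with h | h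
    · rw [h1.2.2.2 k2 h] at h2
      exact absurd h2.2.2.1 (lt_irrefl _)
    · rw [h2.2.2.2 k1 h] at h1
      exact absurd h1.2.2.1 (lt_irrefl _)
  have hsplit2 : ∀ k : Fin m,
      (Finset.univ.filter (fun w : Fin m → Fin 4 =>
          OKf none none w ∧ w k < c k ∧ ∀ j, k < j → w j = c j)).card
        = ∑ a : Fin 4, if a < c k then
            (if badO (oGet c (k.val+2)) (oGet c (k.val+1)) (some a) then 0
              else cnt (oGet c (k.val+1)) (some a) k.val) else 0 := by
    intro k
    have hb : Finset.univ.filter (fun w : Fin m → Fin 4 =>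
          OKf none none w ∧ w k < c k ∧ ∀ j, k < j → w j = c j)
        = (Finset.univ.filter (fun a : Fin 4 => a < c k)).biUnion (fun a =>
            Finset.univ.filter (fun w : Fin m → Fin 4 =>
              OKf none none w ∧ w k = a ∧ ∀ j, k < j → w j = c j)) := by
      ext w
      simp only [Finset.mem_filter, Finset.mem_univ, true_and, Finset.mem_biUnion]
      constructor
      · rintro ⟨hw, h1, h2⟩
        exact ⟨w k, h1, hw, rfl, h2⟩
      · rintro ⟨a, ha, hw, h1, h2⟩
        exact ⟨hw, h1 ▸ ha, h2⟩
    have hd : ∀ a1 ∈ Finset.univ.filter (fun a : Fin 4 => a < c k),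
        ∀ a2 ∈ Finset.univ.filter (fun a : Fin 4 => a < c k), a1 ≠ a2 → Disjoint
          (Finset.univ.filter (fun w : Fin m → Fin 4 =>
            OKf none none w ∧ w k = a1 ∧ ∀ j, k < j → w j = c j))
          (Finset.univ.filter (fun w : Fin m → Fin 4 =>
            OKf none none w ∧ w k = a2 ∧ ∀ j, k < j → w j = c j)) := by
      intro a1 _ a2 _ hne
      rw [Finset.disjoint_left]
      rintro w h1 h2
      rw [Finset.mem_filter] at h1 h2
      exact hne (h1.2.2.1 ▸ h2.2.2.1)
    rw [hb, Finset.card_biUnion hd, Finset.sum_filter]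
    refine Finset.sum_congr rfl (fun a _ => ?_)
    split
    · exact card_fiber c hcO k a
    · rfl
  rw [hlex, hpart, Finset.card_biUnion hdisj1]
  push_cast
  rw [Finset.mul_sum]
  refine Finset.sum_congr rfl (fun k _ => ?_)
  rw [hsplit2 k]
  have hkm : k.val < m := k.isLt
  by_cases h1 : k.val + 1 < m
  · -- k is not the top position
    have ho1 : oGet c (k.val+1) = some (c ⟨k.val+1, h1⟩) := by unfold oGet; rw [dif_pos h1]
    have hev1 : extVal c (k.val+1) = (c ⟨k.val+1, h1⟩ : ℕ) := by unfold extVal; rw [dif_pos h1]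
    have hev0 : extVal c k.val = (c k : ℕ) := by unfold extVal; rw [dif_pos hkm]
    by_cases h2 : k.val + 2 < m
    · have ho2 : oGet c (k.val+2) = some (c ⟨k.val+2, h2⟩) := by unfold oGet; rw [dif_pos h2]
      have hev2 : extVal c (k.val+2) = (c ⟨k.val+2, h2⟩ : ℕ) := by unfold extVal; rw [dif_pos h2]
      have hw : ¬ bad (c ⟨k.val+2, h2⟩) (c ⟨k.val+1, h1⟩) (c k) := by
        have := hcO k.val hkm
        rwa [ctxGet_lt none none c h2, ctxGet_lt none none c h1, ctxGet_lt none none c hkm,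
          badO_some] at this
      rw [ho1, ho2]
      simp only [badO_some, cnt_some]
      rw [npY2, npY1, hev2, hev1, hev0, (hff k.val).1, (hff k.val).2]
      simp only [h1, h2, true_and, if_true, eq_self_iff_true]
      obtain ⟨t, ht⟩ : ∃ t, c ⟨k.val+2, h2⟩ = t := ⟨_, rfl⟩
      obtain ⟨b, hb⟩ : ∃ b, c ⟨k.val+1, h1⟩ = b := ⟨_, rfl⟩
      obtain ⟨e, he⟩ : ∃ e, c k = e := ⟨_, rfl⟩
      rw [ht, hb, he] at hw ⊢
      revert hw
      generalize gF k.val = F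
      generalize gR k.val = R
      fin_cases t <;> fin_cases b <;> fin_cases e <;> intro hw <;>
        first
          | exact absurd (by decide) hw
          | (simp (config := { decide := true })
              [bad, bad2, Fin.sum_univ_four, Fin.lt_def, val0, val1, val2, val3] <;>
             push_cast <;> ring)
    · have ho2 : oGet c (k.val+2) = none := by unfold oGet; rw [dif_neg h2]
      have hy1 : npY1 c k.val = 0 := by
        rw [npY1, if_neg]; rintro ⟨h, -⟩; exact h2 h
      rw [ho1, ho2, hy1]
      simp only [badO_none1, if_false, cnt_some]
      rw [npY2, hy1, hev1, hev0, (hff k.val).1, (hff k.val).2]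
      simp only [h1, true_and, if_true, eq_self_iff_true]
      obtain ⟨b, hb⟩ : ∃ b, c ⟨k.val+1, h1⟩ = b := ⟨_, rfl⟩
      obtain ⟨e, he⟩ : ∃ e, c k = e := ⟨_, rfl⟩
      rw [hb, he]
      generalize gF k.val = F
      generalize gR k.val = R
      fin_cases b <;> fin_cases e <;>
        (simp (config := { decide := true })
            [bad2, Fin.sum_univ_four, Fin.lt_def, val0, val1, val2, val3] <;>
          push_cast <;> ring)
  · -- k is the top position
    have ho1 : oGet c (k.val+1) = none := by unfold oGet; rw [dif_neg h1]
    have hy1 : npY1 c k.val = 0 := by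
      rw [npY1, if_neg]; rintro ⟨h, -⟩; omega
    have hy2 : npY2 c k.val = 0 := by
      rw [npY2, if_neg]; rintro ⟨-, h, -⟩; omega
    rw [ho1, hy1, hy2]
    simp only [badO_none2, if_false, cnt_none_some]
    rw [(hff k.val).1]
    obtain ⟨e, he⟩ : ∃ e, c k = e := ⟨_, rfl⟩
    rw [he]
    generalize gF k.val = F
    fin_cases e <;>
      (simp (config := { decide := true })
          [Fin.sum_univ_four, Fin.lt_def, val0, val1, val2, val3] <;>
        push_cast <;> ring)
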